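/- Let g be a holomorphic function on a neighborhood U of c* ∈ ℂ with g(c*) = v*, g'(c*) = 0, g''(c*) ≠ 0, and suppose there is a biholomorphic chart η on U with η(c*) = 0 and g(w) = η(w)² + v* for all w ∈ U. Let u₁,…,uₙ be distinct complex numbers all different from c*. Then as t → 0⁺, the sum over the two preimages w ∈ U of v* + t of 1/(∏ᵢ(w − uᵢ) · g'(w)²) equals C/t + O(1), where C = 1/(∏ᵢ(c* − uᵢ) · g''(c*)) ≠ 0. -/

import Mathlib

open Topology Filter

lemma aux_dslope (h : ℂ → ℂ) (hh : AnalyticAt ℂ h 0) :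
    ∃ q : ℂ → ℂ, ContinuousAt q 0 ∧
      ∀ s : ℂ, s ≠ 0 → h s + h (-s) - 2 * h 0 = s ^ 2 * (q s + q (-s)) := by
  obtain ⟨p, hp⟩ := hh
  set q := dslope (dslope h 0) 0 with hqdef
  have hq : AnalyticAt ℂ q 0 :=
    (hp.has_fpower_series_dslope_fslope.has_fpower_series_dslope_fslope).analyticAt
  refine ⟨q, hq.continuousAt, ?_⟩
  intro s hs
  have hs' : -s ≠ 0 := neg_ne_zero.2 hs
  simp only [hqdef, dslope_of_ne _ hs, dslope_of_ne _ hs', dslope_same, slope_def_field]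
  field_simp
  ring

/-- Asymptotics of the local pushforward near a simple critical point. Let `g` be
holomorphic on a neighborhood `U` of `c*` with critical value `v* = g(c*)`, given
in the local normal form `g = η² + v*` for a biholomorphic chart `η` with
`η(c*) = 0`; let `u₁, …, uₙ` be distinct complex numbers, all different from `c*`.
If for small `t > 0` the preimages of `v* + t` in `U` are exactly the two points
`w₊(t) ≠ w₋(t)`, then
`∑_{w ∈ U, g(w) = v* + t} 1/(∏ᵢ (w - uᵢ) · g'(w)²) = C/t + O(1)` as `t → 0⁺`,
where `C = 1/(∏ᵢ (c* - uᵢ) · g''(c*))` is nonzero. -/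
theorem stmt7 (n : ℕ) (U : Set ℂ) (hU : IsOpen U) (cstar vstar : ℂ)
    (hc : cstar ∈ U) (g η : ℂ → ℂ)
    (hη : AnalyticOnNhd ℂ η U) (hηinj : Set.InjOn η U) (hη0 : η cstar = 0)
    (hg : ∀ w ∈ U, g w = (η w) ^ 2 + vstar)
    (hg' : deriv g cstar = 0) (hg'' : iteratedDeriv 2 g cstar ≠ 0)
    (u : Fin n → ℂ) (hu : Function.Injective u) (huc : ∀ i, u i ≠ cstar)
    (wp wm : ℝ → ℂ)
    (hw : ∀ᶠ t in 𝓝[>] (0 : ℝ), wp t ∈ U ∧ wm t ∈ U ∧ wp t ≠ wm t ∧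
      {w ∈ U | g w = vstar + (t : ℂ)} = {wp t, wm t}) :
    Asymptotics.IsBigO (𝓝[>] (0 : ℝ))
      (fun t : ℝ =>
        ((∏ i, (wp t - u i)) * (deriv g (wp t)) ^ 2)⁻¹
          + ((∏ i, (wm t - u i)) * (deriv g (wm t)) ^ 2)⁻¹
          - ((∏ i, (cstar - u i)) * iteratedDeriv 2 g cstar)⁻¹ / (t : ℂ))
      (fun _ => (1 : ℝ)) ∧
    ((∏ i, (cstar - u i)) * iteratedDeriv 2 g cstar)⁻¹ ≠ 0 := by
  set d := deriv η cstar with hd_def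
  -- derivative of g on U
  have hgU : ∀ w ∈ U, deriv g w = 2 * η w * deriv η w := by
    intro w hw0
    have hev : g =ᶠ[𝓝 w] fun z => η z ^ 2 + vstar :=
      Filter.eventuallyEq_of_mem (hU.mem_nhds hw0) hg
    have hder : HasDerivAt (fun z => η z ^ 2 + vstar) (2 * η w * deriv η w) w := by
      have h1 := ((hη w hw0).differentiableAt.hasDerivAt.pow 2).add_const vstar
      refine h1.congr_deriv ?_
      push_cast
      ring
    rw [hev.deriv_eq, hder.deriv]
  have hη' : AnalyticOnNhd ℂ (deriv η) U := hη.deriv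
  -- second derivative of g at cstar
  have hg2 : iteratedDeriv 2 g cstar = 2 * d ^ 2 := by
    have hev : deriv g =ᶠ[𝓝 cstar] fun w => 2 * η w * deriv η w :=
      Filter.eventuallyEq_of_mem (hU.mem_nhds hc) hgU
    have hder : HasDerivAt (fun w => 2 * η w * deriv η w) (2 * d ^ 2) cstar := by
      have h1 : HasDerivAt (fun w => 2 * η w) (2 * d) cstar := by
        simpa [hd_def] using ((hη cstar hc).differentiableAt.hasDerivAt.const_mul (2 : ℂ))
      have h2 : HasDerivAt (deriv η) (deriv (deriv η) cstar) cstar :=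
        (hη' cstar hc).differentiableAt.hasDerivAt
      have h3 := h1.mul h2
      refine h3.congr_deriv ?_
      rw [hη0, hd_def]
      ring
    have h2eq : iteratedDeriv 2 g cstar = deriv (deriv g) cstar := by
      rw [show (2 : ℕ) = 1 + 1 from rfl, iteratedDeriv_succ, iteratedDeriv_one]
    rw [h2eq, hev.deriv_eq, hder.deriv]
  have hd0 : d ≠ 0 := by
    intro h0
    apply hg''
    rw [hg2, h0]
    ring
  -- local inverse of η
  have hsd : HasStrictDerivAt η d cstar := by
    have := (hη cstar hc).hasStrictFDerivAt.hasStrictDerivAt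
    simpa [hd_def, fderiv_apply_one_eq_deriv] using this
  have hsf := hsd.hasStrictFDerivAt_equiv hd0
  set Φ := hsf.toOpenPartialHomeomorph η with hΦ
  have hcs : cstar ∈ Φ.source := hsf.mem_toOpenPartialHomeomorph_source
  have hΦcoe : (Φ : ℂ → ℂ) = η := hsf.toOpenPartialHomeomorph_coe
  set ψ : ℂ → ℂ := (Φ.symm : ℂ → ℂ) with hψdef
  have hψ0 : ψ 0 = cstar := by
    rw [← hη0, ← hΦcoe]
    exact Φ.left_inv hcs
  have hψan : AnalyticAt ℂ ψ 0 := by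
    have h' : fderiv ℂ Φ cstar
        = (ContinuousLinearEquiv.unitsEquivAut ℂ (Units.mk0 d hd0) : ℂ →L[ℂ] ℂ) := by
      rw [hΦcoe]
      exact hsf.hasFDerivAt.fderiv
    have := Φ.analyticAt_symm' hcs (by rw [hΦcoe]; exact hη cstar hc) h'
    rwa [hΦcoe, hη0] at this
  have hψcont : ContinuousAt ψ 0 := hψan.continuousAt
  have hrinv : ∀ᶠ s in 𝓝 (0 : ℂ), η (ψ s) = s := by
    have h1 := Φ.eventually_right_inverse' hcs
    rw [hΦcoe, hη0] at h1
    exact h1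
  have hmemU : ∀ᶠ s in 𝓝 (0 : ℂ), ψ s ∈ U := by
    have h1 : U ∈ 𝓝 (ψ 0) := by rw [hψ0]; exact hU.mem_nhds hc
    exact hψcont h1
  -- the analytic function h
  set F : ℂ → ℂ := fun w => (∏ i, (w - u i)) * (deriv η w) ^ 2 with hF
  set h : ℂ → ℂ := fun s => (F (ψ s))⁻¹ with hh
  have hprodne : (∏ i, (cstar - u i)) ≠ 0 :=
    Finset.prod_ne_zero_iff.2 fun i _ => sub_ne_zero_of_ne (huc i).symm
  have hF0 : F cstar ≠ 0 := mul_ne_zero hprodne (pow_ne_zero 2 hd0)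
  have hFan : AnalyticAt ℂ F cstar := by
    apply AnalyticAt.mul
    · exact Finset.analyticAt_fun_prod _ fun i _ => (analyticAt_id (𝕜 := ℂ)).sub analyticAt_const
    · exact (hη' cstar hc).pow 2
  have hhan : AnalyticAt ℂ h 0 := by
    have hc2 : AnalyticAt ℂ F (ψ 0) := hψ0 ▸ hFan
    have hcomp := hc2.comp hψan
    have hne : (F ∘ ψ) 0 ≠ 0 := by
      simp only [Function.comp_apply, hψ0]
      exact hF0
    exact hcomp.inv hne
  have h0val : h 0 = ((∏ i, (cstar - u i)) * d ^ 2)⁻¹ := by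
    simp [hh, hF, hψ0, hd_def]
  obtain ⟨q, hqc, hqeq⟩ := aux_dslope h hhan
  -- square root parametrization
  set st : ℝ → ℂ := fun t => ((Real.sqrt t : ℝ) : ℂ) with hst
  have hst_tendsto : Tendsto st (𝓝[>] (0 : ℝ)) (𝓝 (0 : ℂ)) := by
    have h1 : Tendsto Real.sqrt (𝓝[>] (0 : ℝ)) (𝓝 0) := by
      have h0 : Tendsto Real.sqrt (𝓝 (0 : ℝ)) (𝓝 (Real.sqrt 0)) := Real.continuous_sqrt.tendsto 0
      simpa using h0.mono_left (nhdsWithin_le_nhds (s := Set.Ioi (0 : ℝ)))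
    have h2 : Tendsto (fun x : ℝ => (x : ℂ)) (𝓝 (0 : ℝ)) (𝓝 (((0 : ℝ) : ℂ))) :=
      Complex.continuous_ofReal.tendsto 0
    have h3 := h2.comp h1
    simpa [hst, Function.comp_def] using h3
  have hstneg : Tendsto (fun t => -st t) (𝓝[>] (0 : ℝ)) (𝓝 (0 : ℂ)) := by
    simpa using hst_tendsto.neg
  -- comparison function
  set Q : ℝ → ℂ := fun t => (q (st t) + q (-st t)) / 4 with hQ
  have hQt : Tendsto Q (𝓝[>] (0 : ℝ)) (𝓝 ((q 0 + q 0) / 4)) := by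
    have := ((hqc.tendsto.comp hst_tendsto).add (hqc.tendsto.comp hstneg)).div_const (4 : ℂ)
    simpa [hQ, Function.comp] using this
  have hQO : Asymptotics.IsBigO (𝓝[>] (0 : ℝ)) Q (fun _ => (1 : ℝ)) := hQt.isBigO_one ℝ
  refine ⟨?_, inv_ne_zero (mul_ne_zero hprodne hg'')⟩
  have heq : (fun t : ℝ =>
        ((∏ i, (wp t - u i)) * (deriv g (wp t)) ^ 2)⁻¹
          + ((∏ i, (wm t - u i)) * (deriv g (wm t)) ^ 2)⁻¹
          - ((∏ i, (cstar - u i)) * iteratedDeriv 2 g cstar)⁻¹ / (t : ℂ))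
      =ᶠ[𝓝[>] (0 : ℝ)] Q := by
    filter_upwards [hw, hst_tendsto.eventually (hrinv.and hmemU),
      hstneg.eventually (hrinv.and hmemU), eventually_mem_nhdsWithin] with t hwt hp1 hp2 ht
    obtain ⟨hwpU, hwmU, hne, hset⟩ := hwt
    obtain ⟨hη1, hU1⟩ := hp1
    obtain ⟨hη2, hU2⟩ := hp2
    have ht0 : (0 : ℝ) < t := ht
    have htne : (t : ℂ) ≠ 0 := by exact_mod_cast ht0.ne'
    set s := st t with hs_def
    have hs2 : s ^ 2 = (t : ℂ) := by
      rw [hs_def, hst, ← Complex.ofReal_pow, Real.sq_sqrt ht0.le]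
    have hsne : s ≠ 0 := fun h0 => htne (by rw [← hs2, h0]; ring)
    set a := ψ s with ha_def
    set b := ψ (-s) with hb_def
    have hga : g a = vstar + t := by rw [hg a hU1, hη1, hs2]; ring
    have hgb : g b = vstar + t := by
      rw [hg b hU2, hη2, neg_pow, hs2]
      ring
    have hab : a ≠ b := by
      intro e
      apply hsne
      have h2 : s = -s := by
        conv_lhs => rw [← hη1, e]
        exact hη2
      have h3 : (2 : ℂ) * s = 0 := by linear_combination h2
      simpa using (mul_eq_zero.1 h3).resolve_left (by norm_num)
    have hamem : a ∈ ({wp t, wm t} : Set ℂ) := by rw [← hset]; exact ⟨hU1, hga⟩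
    have hbmem : b ∈ ({wp t, wm t} : Set ℂ) := by rw [← hset]; exact ⟨hU2, hgb⟩
    simp only [Set.mem_insert_iff, Set.mem_singleton_iff] at hamem hbmem
    have hda : deriv g a = 2 * s * deriv η a := by rw [hgU a hU1, hη1]
    have hdb : deriv g b = 2 * (-s) * deriv η b := by rw [hgU b hU2, hη2]
    have hTa : ((∏ i, (a - u i)) * (deriv g a) ^ 2)⁻¹ = (4 * (t : ℂ))⁻¹ * h s := by
      rw [hda, hh]
      simp only [hF, ha_def]
      rw [show (2 * s * deriv η (ψ s)) ^ 2 = (4 * (t : ℂ)) * (deriv η (ψ s)) ^ 2 by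
        rw [← hs2]; ring]
      rw [mul_inv, mul_inv, mul_inv]
      ring
    have hTb : ((∏ i, (b - u i)) * (deriv g b) ^ 2)⁻¹ = (4 * (t : ℂ))⁻¹ * h (-s) := by
      rw [hdb, hh]
      simp only [hF, hb_def]
      rw [show (2 * -s * deriv η (ψ (-s))) ^ 2 = (4 * (t : ℂ)) * (deriv η (ψ (-s))) ^ 2 by
        rw [← hs2]; ring]
      rw [mul_inv, mul_inv, mul_inv]
      ring
    have hC : ((∏ i, (cstar - u i)) * iteratedDeriv 2 g cstar)⁻¹ = (2 : ℂ)⁻¹ * h 0 := by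
      rw [hg2, h0val, mul_inv, mul_inv, mul_inv]
      ring
    have hsum : ((∏ i, (wp t - u i)) * (deriv g (wp t)) ^ 2)⁻¹
        + ((∏ i, (wm t - u i)) * (deriv g (wm t)) ^ 2)⁻¹
        = ((∏ i, (a - u i)) * (deriv g a) ^ 2)⁻¹ + ((∏ i, (b - u i)) * (deriv g b) ^ 2)⁻¹ := by
      rcases hamem with ha | ha <;> rcases hbmem with hb | hb
      · exact absurd (ha.trans hb.symm) hab
      · rw [← ha, ← hb]
      · rw [← ha, ← hb]; ring
      · exact absurd (ha.trans hb.symm) hab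
    rw [hsum, hTa, hTb, hC, hQ]
    have hkey2 : h s + h (-s) - 2 * h 0 = (t : ℂ) * (q s + q (-s)) := by
      rw [← hs2]; exact hqeq s hsne
    have e1 : (4 * (t : ℂ))⁻¹ * h s + (4 * (t : ℂ))⁻¹ * h (-s) - (2 : ℂ)⁻¹ * h 0 / (t : ℂ)
        = (h s + h (-s) - 2 * h 0) / (4 * (t : ℂ)) := by
      field_simp
      ring
    rw [e1, hkey2]
    simp only [hQ, ← hs_def]
    field_simp
  exact heq.trans_isBigO hQO
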